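/- Let X, X' be n×d matrices differing in exactly one entry with ‖X − X'‖₁ ≤ 1, let P be a d×k matrix with i.i.d. N(0, 1/k) entries, let Δ be an n×k matrix with i.i.d. Laplace(0, 2√k/ε) entries independent of P, and set Z = XP + Δ, Z' = X'P + Δ. Then with probability at least 1 − d·e^{−k/2} over the choice of P, for all measurable sets D we have both Pr[Z ∈ D | P] ≤ e^ε·Pr[Z' ∈ D | P] and Pr[Z' ∈ D | P] ≤ e^ε·Pr[Z ∈ D | P]. -/

import Mathlib

open MeasureTheory ProbabilityTheory

/-- The Laplace distribution with mean 0 and scale `b`, as a measure on `ℝ`. -/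
noncomputable def laplace (b : ℝ) : Measure ℝ :=
  volume.withDensity fun x => ENNReal.ofReal ((2 * b)⁻¹ * Real.exp (-|x| / b))



open scoped ENNReal NNReal


theorem lintegral_pi_prod {α : Type} [MeasurableSpace α] (μ : Measure α) [SigmaFinite μ] :
    ∀ {m : ℕ} (f : Fin m → α → ℝ≥0∞), (∀ i, Measurable (f i)) →
    ∫⁻ x : Fin m → α, ∏ i, f i (x i) ∂(Measure.pi fun _ => μ) = ∏ i, ∫⁻ y, f i y ∂μ
  | 0, f, hf => by
      simp [Measure.pi_of_empty (fun _ : Fin 0 => μ)]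
  | (m+1), f, hf => by
      have hmp := measurePreserving_piFinSuccAbove (fun _ : Fin (m+1) => μ) 0
      have hF : Measurable (fun p : α × (Fin m → α) =>
          f 0 p.1 * ∏ j : Fin m, f j.succ (p.2 j)) := by
        refine ((hf 0).comp measurable_fst).mul ?_
        exact Finset.measurable_prod _ fun j _ =>
          (hf j.succ).comp ((measurable_pi_apply j).comp measurable_snd)
      have key := hmp.lintegral_comp hF
      have hfun : ∀ x : Fin (m+1) → α,
          (fun p : α × (Fin m → α) => f 0 p.1 * ∏ j : Fin m, f j.succ (p.2 j))
            ((MeasurableEquiv.piFinSuccAbove (fun _ => α) 0) x)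
          = ∏ i, f i (x i) := by
        intro x
        simp [MeasurableEquiv.piFinSuccAbove_apply, Fin.insertNthEquiv,
          Fin.zero_succAbove, Fin.prod_univ_succ, Fin.tail]
      calc ∫⁻ x : Fin (m+1) → α, ∏ i, f i (x i) ∂(Measure.pi fun _ => μ)
          = ∫⁻ p : α × (Fin m → α), f 0 p.1 * ∏ j : Fin m, f j.succ (p.2 j)
              ∂(μ.prod (Measure.pi fun _ => μ)) := by
            rw [← key]; exact lintegral_congr fun x => (hfun x).symm
        _ = (∫⁻ y, f 0 y ∂μ) * ∫⁻ q : Fin m → α, ∏ j : Fin m, f j.succ (q j)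
              ∂(Measure.pi fun _ => μ) := by
            exact lintegral_prod_mul (hf 0).aemeasurable
              (Finset.measurable_prod _ fun (j : Fin m) _ =>
                (hf j.succ).comp (measurable_pi_apply j)).aemeasurable
        _ = (∫⁻ y, f 0 y ∂μ) * ∏ j : Fin m, ∫⁻ y, f j.succ y ∂μ := by
            rw [lintegral_pi_prod μ _ fun j => hf j.succ]
        _ = ∏ i, ∫⁻ y, f i y ∂μ := (Fin.prod_univ_succ fun i => ∫⁻ y, f i y ∂μ).symm

theorem pi_withDensity' {α : Type} [MeasurableSpace α] (μ : Measure α) [SigmaFinite μ]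
    {m : ℕ} (ρ : α → ℝ≥0∞) (hρ : Measurable ρ) [SigmaFinite (μ.withDensity ρ)] :
    (Measure.pi fun _ : Fin m => μ.withDensity ρ)
      = (Measure.pi fun _ : Fin m => μ).withDensity (fun x => ∏ i, ρ (x i)) := by
  refine Measure.pi_eq fun s hs => ?_
  rw [withDensity_apply _ (MeasurableSet.univ_pi hs)]
  have h1 : ∫⁻ x in Set.pi Set.univ s, ∏ i, ρ (x i) ∂(Measure.pi fun _ : Fin m => μ)
      = ∫⁻ x : Fin m → α, ∏ i, (s i).indicator ρ (x i) ∂(Measure.pi fun _ : Fin m => μ) := by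
    rw [← lintegral_indicator (MeasurableSet.univ_pi hs)]
    refine lintegral_congr fun x => ?_
    by_cases hx : x ∈ Set.pi Set.univ s
    · rw [Set.indicator_of_mem hx]
      exact Finset.prod_congr rfl fun i _ => (Set.indicator_of_mem (hx i (Set.mem_univ i)) ρ).symm
    · rw [Set.indicator_of_notMem hx]
      rw [Set.mem_univ_pi] at hx
      push_neg at hx
      obtain ⟨i, hi⟩ := hx
      exact ((Finset.prod_eq_zero (Finset.mem_univ i)
        (Set.indicator_of_notMem hi ρ))).symm
  rw [h1, lintegral_pi_prod μ _ fun i => hρ.indicator (hs i)]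
  exact Finset.prod_congr rfl fun i _ => by
    rw [withDensity_apply _ (hs i), ← lintegral_indicator (hs i)]

instance laplace.instSigmaFinite (b : ℝ) : SigmaFinite (laplace b) := by
  show SigmaFinite (volume.withDensity fun x => ENNReal.ofReal ((2 * b)⁻¹ * Real.exp (-|x| / b)))
  infer_instance

theorem measurable_lapDensity (b : ℝ) :
    Measurable fun x : ℝ => ENNReal.ofReal ((2 * b)⁻¹ * Real.exp (-|x| / b)) := by
  fun_prop

theorem lap_shift {n k : ℕ} {b : ℝ} (hb : 0 < b) (M : Fin n → Fin k → ℝ)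
    {D : Set (Fin n → Fin k → ℝ)} (hD : MeasurableSet D) :
    (Measure.pi fun _ : Fin n => Measure.pi fun _ : Fin k => laplace b) {Δ | M + Δ ∈ D}
      ≤ ENNReal.ofReal (Real.exp ((∑ i, ∑ j, |M i j|) / b)) *
        (Measure.pi fun _ : Fin n => Measure.pi fun _ : Fin k => laplace b) D := by
  set ρ : ℝ → ℝ≥0∞ := fun x => ENNReal.ofReal ((2 * b)⁻¹ * Real.exp (-|x| / b)) with hρdef
  have hρ : Measurable ρ := measurable_lapDensity b
  set g : (Fin k → ℝ) → ℝ≥0∞ := fun q => ∏ j, ρ (q j) with hgdef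
  have hg : Measurable g := Finset.measurable_prod _ fun (j : Fin k) _ =>
    hρ.comp (measurable_pi_apply j)
  set G : (Fin n → Fin k → ℝ) → ℝ≥0∞ := fun Δ => ∏ i, g (Δ i) with hGdef
  have hG : Measurable G := Finset.measurable_prod _ fun (i : Fin n) _ =>
    hg.comp (measurable_pi_apply i)
  have h1 : (Measure.pi fun _ : Fin k => laplace b)
      = (Measure.pi fun _ : Fin k => (volume : Measure ℝ)).withDensity g :=
    pi_withDensity' volume ρ hρ
  haveI : SigmaFinite ((Measure.pi fun _ : Fin k => (volume : Measure ℝ)).withDensity g) := by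
    rw [← h1]; infer_instance
  have h2 : (Measure.pi fun _ : Fin n => Measure.pi fun _ : Fin k => laplace b)
      = (Measure.pi fun _ : Fin n =>
          Measure.pi fun _ : Fin k => (volume : Measure ℝ)).withDensity G := by
    simp_rw [h1]
    exact pi_withDensity' _ g hg
  set Λ := Measure.pi fun _ : Fin n => Measure.pi fun _ : Fin k => (volume : Measure ℝ) with hΛ
  have hmap : Measurable fun Δ : Fin n → Fin k → ℝ => M + Δ :=
    measurable_id.const_add M
  have hpre : MeasurableSet {Δ : Fin n → Fin k → ℝ | M + Δ ∈ D} := hmap hD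
  set c : ℝ≥0∞ := ENNReal.ofReal (Real.exp ((∑ i, ∑ j, |M i j|) / b)) with hc
  have hρ_shift : ∀ t u : ℝ, ρ (u - t) ≤ ENNReal.ofReal (Real.exp (|t| / b)) * ρ u := by
    intro t u
    rw [hρdef]
    dsimp only
    rw [← ENNReal.ofReal_mul (Real.exp_nonneg _)]
    apply ENNReal.ofReal_le_ofReal
    have htri : -|u - t| ≤ |t| + -|u| := by
      have := abs_add_le t (u - t)
      simp only [add_sub_cancel] at this
      linarith
    have h3 : Real.exp (-|u - t| / b) ≤ Real.exp (|t| / b) * Real.exp (-|u| / b) := by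
      rw [← Real.exp_add, ← add_div]
      apply Real.exp_le_exp.2
      gcongr
    calc (2*b)⁻¹ * Real.exp (-|u-t|/b)
        ≤ (2*b)⁻¹ * (Real.exp (|t|/b) * Real.exp (-|u|/b)) :=
          mul_le_mul_of_nonneg_left h3 (by positivity)
      _ = Real.exp (|t|/b) * ((2*b)⁻¹ * Real.exp (-|u|/b)) := by ring
  have hpt : ∀ y : Fin n → Fin k → ℝ, G (y - M) ≤ c * G y := by
    intro y
    have hGyM : G (y - M) = ∏ i, ∏ j, ρ (y i j - M i j) := rfl
    rw [hGyM]
    calc ∏ i, ∏ j, ρ (y i j - M i j)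
        ≤ ∏ i, ∏ j, ENNReal.ofReal (Real.exp (|M i j| / b)) * ρ (y i j) :=
          Finset.prod_le_prod' fun i _ => Finset.prod_le_prod' fun j _ =>
            hρ_shift (M i j) (y i j)
      _ = (∏ i, ∏ j, ENNReal.ofReal (Real.exp (|M i j| / b))) * G y := by
          rw [hGdef]
          simp only [Finset.prod_mul_distrib, hgdef]
      _ = c * G y := by
          congr 1
          rw [hc]
          have hsum : (∑ i, ∑ j, |M i j|) / b = ∑ i, ∑ j, |M i j| / b := by
            simp [Finset.sum_div]
          rw [hsum, Real.exp_sum,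
            ENNReal.ofReal_prod_of_nonneg (fun i _ => by positivity)]
          refine (Finset.prod_congr rfl fun i _ => ?_).symm
          rw [Real.exp_sum, ENNReal.ofReal_prod_of_nonneg (fun j _ => Real.exp_nonneg _)]
  have hkey : ∀ Δ : Fin n → Fin k → ℝ,
      ({Δ' : Fin n → Fin k → ℝ | M + Δ' ∈ D}.indicator G) Δ
        = (D.indicator fun y => G (y - M)) (M + Δ) := by
    intro Δ
    by_cases h : M + Δ ∈ D
    · rw [Set.indicator_of_mem (by exact h), Set.indicator_of_mem h, add_sub_cancel_left]
    · rw [Set.indicator_of_notMem (by exact h), Set.indicator_of_notMem h]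
  calc (Measure.pi fun _ : Fin n => Measure.pi fun _ : Fin k => laplace b) {Δ | M + Δ ∈ D}
      = ∫⁻ Δ in {Δ : Fin n → Fin k → ℝ | M + Δ ∈ D}, G Δ ∂Λ := by
        rw [h2]; exact withDensity_apply _ hpre
    _ = ∫⁻ Δ, ({Δ' : Fin n → Fin k → ℝ | M + Δ' ∈ D}.indicator G) Δ ∂Λ :=
        (lintegral_indicator hpre G).symm
    _ = ∫⁻ Δ, (D.indicator fun y => G (y - M)) (M + Δ) ∂Λ := lintegral_congr hkey
    _ = ∫⁻ y, (D.indicator fun y => G (y - M)) y ∂Λ :=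
        lintegral_add_left_eq_self (D.indicator fun y => G (y - M)) M
    _ = ∫⁻ y in D, G (y - M) ∂Λ := lintegral_indicator hD _
    _ ≤ ∫⁻ y in D, c * G y ∂Λ := lintegral_mono fun y => hpt y
    _ = c * ∫⁻ y in D, G y ∂Λ := lintegral_const_mul c hG
    _ = c * (Measure.pi fun _ : Fin n => Measure.pi fun _ : Fin k => laplace b) D := by
        rw [h2, withDensity_apply _ hD]

theorem shift_priv {n k : ℕ} {b ε : ℝ} (hb : 0 < b) (C C' : Fin n → Fin k → ℝ)
    (hM : (∑ i, ∑ j, |C i j - C' i j|) ≤ ε * b) {D : Set (Fin n → Fin k → ℝ)}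
    (hD : MeasurableSet D) :
    (Measure.pi fun _ : Fin n => Measure.pi fun _ : Fin k => laplace b)
        {Δ | (fun i j => C i j + Δ i j) ∈ D}
      ≤ ENNReal.ofReal (Real.exp ε) *
        (Measure.pi fun _ : Fin n => Measure.pi fun _ : Fin k => laplace b)
          {Δ | (fun i j => C' i j + Δ i j) ∈ D} := by
  set D' : Set (Fin n → Fin k → ℝ) := {Δ | (fun i j => C' i j + Δ i j) ∈ D} with hD'def
  have hD' : MeasurableSet D' := by
    have : D' = (fun Δ : Fin n → Fin k → ℝ => C' + Δ) ⁻¹' D := rfl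
    rw [this]
    exact (measurable_id.const_add C') hD
  have hfun : ∀ Δ : Fin n → Fin k → ℝ,
      (fun i j => C' i j + ((C - C') + Δ) i j) = (fun i j => C i j + Δ i j) := by
    intro Δ
    funext i j
    show C' i j + (C i j - C' i j + Δ i j) = _
    ring
  have hset : {Δ : Fin n → Fin k → ℝ | (fun i j => C i j + Δ i j) ∈ D}
      = {Δ : Fin n → Fin k → ℝ | (C - C') + Δ ∈ D'} := by
    ext Δ
    simp only [Set.mem_setOf_eq, hD'def, hfun Δ]
  rw [hset]
  refine (lap_shift hb (C - C') hD').trans ?_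
  apply mul_le_mul_left
  apply ENNReal.ofReal_le_ofReal
  apply Real.exp_le_exp.2
  rw [div_le_iff₀ hb]
  exact hM

theorem exp_mul_gaussianPDFReal (v : NNReal) (hv : v ≠ 0) (t x : ℝ) :
    Real.exp (t * x) * gaussianPDFReal 0 v x
      = Real.exp ((v : ℝ) * t ^ 2 / 2) * gaussianPDFReal (t * v) v x := by
  have hv0 : (0 : ℝ) < (v : ℝ) := NNReal.coe_pos.2 (pos_iff_ne_zero.2 hv)
  simp only [gaussianPDFReal]
  rw [mul_left_comm, mul_left_comm (Real.exp ((v : ℝ) * t ^ 2 / 2))]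
  congr 1
  rw [← Real.exp_add, ← Real.exp_add]
  congr 1
  field_simp
  ring

theorem exp_abs_gauss {v : NNReal} (hv : v ≠ 0) {s : ℝ} (hs : 0 ≤ s) :
    ∫⁻ x, ENNReal.ofReal (Real.exp (s * |x|)) ∂(gaussianReal 0 v)
      ≤ ENNReal.ofReal (2 * Real.exp ((v : ℝ) * s ^ 2 / 2)) := by
  have hmexp : Measurable fun x : ℝ => ENNReal.ofReal (Real.exp (s * |x|)) := by fun_prop
  rw [gaussianReal_of_var_ne_zero 0 hv,
    lintegral_withDensity_eq_lintegral_mul _ (measurable_gaussianPDF 0 v) hmexp]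
  have hpt : ∀ x : ℝ, (gaussianPDF 0 v * fun x => ENNReal.ofReal (Real.exp (s * |x|))) x
      ≤ ENNReal.ofReal (Real.exp ((v : ℝ) * s ^ 2 / 2)) *
        (gaussianPDF (s * v) v x + gaussianPDF (-s * v) v x) := by
    intro x
    simp only [Pi.mul_apply, gaussianPDF]
    rw [← ENNReal.ofReal_mul (gaussianPDFReal_nonneg 0 v x),
      ← ENNReal.ofReal_add (gaussianPDFReal_nonneg _ v x) (gaussianPDFReal_nonneg _ v x),
      ← ENNReal.ofReal_mul (Real.exp_nonneg _)]
    apply ENNReal.ofReal_le_ofReal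
    have habs : Real.exp (s * |x|) ≤ Real.exp (s * x) + Real.exp (-s * x) := by
      rcases abs_cases x with ⟨h1, h2⟩ | ⟨h1, h2⟩
      · rw [h1]
        nlinarith [Real.exp_pos (-s * x)]
      · rw [h1]
        have : s * -x = -s * x := by ring
        rw [this]
        nlinarith [Real.exp_pos (s * x)]
    calc gaussianPDFReal 0 v x * Real.exp (s * |x|)
        ≤ gaussianPDFReal 0 v x * (Real.exp (s * x) + Real.exp (-s * x)) :=
          mul_le_mul_of_nonneg_left habs (gaussianPDFReal_nonneg 0 v x)
      _ = Real.exp (s * x) * gaussianPDFReal 0 v x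
            + Real.exp (-s * x) * gaussianPDFReal 0 v x := by ring
      _ = Real.exp ((v : ℝ) * s ^ 2 / 2) *
            (gaussianPDFReal (s * v) v x + gaussianPDFReal (-s * v) v x) := by
          rw [exp_mul_gaussianPDFReal v hv s x, exp_mul_gaussianPDFReal v hv (-s) x]
          have : (v : ℝ) * (-s) ^ 2 / 2 = (v : ℝ) * s ^ 2 / 2 := by ring
          rw [this]
          ring
  calc ∫⁻ x, (gaussianPDF 0 v * fun x => ENNReal.ofReal (Real.exp (s * |x|))) x
      ≤ ∫⁻ x, ENNReal.ofReal (Real.exp ((v : ℝ) * s ^ 2 / 2)) *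
          (gaussianPDF (s * v) v x + gaussianPDF (-s * v) v x) := lintegral_mono hpt
    _ = ENNReal.ofReal (Real.exp ((v : ℝ) * s ^ 2 / 2)) *
          ((∫⁻ x, gaussianPDF (s * v) v x) + ∫⁻ x, gaussianPDF (-s * v) v x) := by
        rw [lintegral_const_mul (f := fun x => gaussianPDF (s * v) v x + gaussianPDF (-s * v) v x) _
            ((measurable_gaussianPDF _ v).add (measurable_gaussianPDF _ v)),
          lintegral_add_left (measurable_gaussianPDF _ v)]
    _ = ENNReal.ofReal (2 * Real.exp ((v : ℝ) * s ^ 2 / 2)) := by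
        rw [lintegral_gaussianPDF_eq_one _ hv, lintegral_gaussianPDF_eq_one _ hv,
          ENNReal.ofReal_mul (by norm_num : (0:ℝ) ≤ 2)]
        rw [mul_comm]
        norm_num

theorem gauss_tail (k : ℕ) (hk : 0 < k) :
    (Measure.pi fun _ : Fin k => gaussianReal 0 (1 / k))
        {q : Fin k → ℝ | 2 * Real.sqrt k < ∑ j, |q j|}
      ≤ ENNReal.ofReal (Real.exp (-(k : ℝ) / 2)) := by
  have hk0 : (0 : ℝ) < k := by exact_mod_cast hk
  set v : NNReal := 1 / k with hvdef
  have hv : v ≠ 0 := by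
    rw [hvdef]
    positivity
  set s : ℝ := 2 * Real.sqrt k with hsdef
  have hs : 0 ≤ s := by positivity
  have hsqk : Real.sqrt k * Real.sqrt k = (k : ℝ) := Real.mul_self_sqrt hk0.le
  have hs2 : s * (2 * Real.sqrt k) = 4 * k := by
    rw [hsdef]; nlinarith [hsqk]
  have hvs : (v : ℝ) * s ^ 2 / 2 = 2 := by
    have hv' : (v : ℝ) = 1 / (k : ℝ) := by
      rw [hvdef]; push_cast; ring
    rw [hv', hsdef]
    field_simp
    nlinarith [hsqk]
  set μk := Measure.pi fun _ : Fin k => gaussianReal 0 (1 / (k : NNReal)) with hμk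
  set B : Set (Fin k → ℝ) := {q | 2 * Real.sqrt k < ∑ j, |q j|} with hBdef
  have hBm : MeasurableSet B := by
    apply measurableSet_lt measurable_const
    exact Finset.measurable_sum _ fun (j : Fin k) _ => (measurable_pi_apply j).abs
  have hmexp : Measurable fun q : Fin k → ℝ =>
      ENNReal.ofReal (Real.exp (s * ∑ j, |q j|)) := by fun_prop
  have key1 : ENNReal.ofReal (Real.exp (4 * k)) * μk B
      ≤ ∫⁻ q, ENNReal.ofReal (Real.exp (s * ∑ j, |q j|)) ∂μk := by
    calc ENNReal.ofReal (Real.exp (4 * k)) * μk B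
        = ∫⁻ _ in B, ENNReal.ofReal (Real.exp (4 * k)) ∂μk := by
          rw [setLIntegral_const]
      _ ≤ ∫⁻ q in B, ENNReal.ofReal (Real.exp (s * ∑ j, |q j|)) ∂μk := by
          apply setLIntegral_mono hmexp
          intro q hq
          apply ENNReal.ofReal_le_ofReal
          apply Real.exp_le_exp.2
          rw [← hs2]
          exact mul_le_mul_of_nonneg_left (le_of_lt hq) hs
      _ ≤ ∫⁻ q, ENNReal.ofReal (Real.exp (s * ∑ j, |q j|)) ∂μk :=
          setLIntegral_le_lintegral _ _
  have key2 : ∫⁻ q, ENNReal.ofReal (Real.exp (s * ∑ j, |q j|)) ∂μk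
      = ∫⁻ q, ∏ j, (fun x : ℝ => ENNReal.ofReal (Real.exp (s * |x|))) (q j) ∂μk := by
    refine lintegral_congr fun q => ?_
    rw [Finset.mul_sum, Real.exp_sum,
      ENNReal.ofReal_prod_of_nonneg fun j _ => Real.exp_nonneg _]
  have key3 : ∫⁻ q, ∏ j, (fun x : ℝ => ENNReal.ofReal (Real.exp (s * |x|))) (q j) ∂μk
      = (∫⁻ x, ENNReal.ofReal (Real.exp (s * |x|)) ∂(gaussianReal 0 v)) ^ k := by
    rw [hμk, lintegral_pi_prod (gaussianReal 0 (1 / (k:NNReal)))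
      (fun _ : Fin k => fun x : ℝ => ENNReal.ofReal (Real.exp (s * |x|)))
      (fun j => by fun_prop)]
    rw [Finset.prod_const, Finset.card_univ, Fintype.card_fin]
  have key4 : (∫⁻ x, ENNReal.ofReal (Real.exp (s * |x|)) ∂(gaussianReal 0 v)) ^ k
      ≤ ENNReal.ofReal (2 * Real.exp 2) ^ k := by
    apply pow_le_pow_left' ?_ k
    have := exp_abs_gauss hv hs
    rwa [hvs] at this
  have hreal : (2 * Real.exp 2) ^ k ≤ Real.exp (4 * k) * Real.exp (-(k : ℝ) / 2) := by
    have h2 : 2 * Real.exp 2 ≤ Real.exp (7 / 2 : ℝ) := by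
      have h21 : (2 : ℝ) ≤ Real.exp (3 / 2 : ℝ) := by
        nlinarith [Real.add_one_le_exp (3 / 2 : ℝ)]
      calc 2 * Real.exp 2 ≤ Real.exp (3/2 : ℝ) * Real.exp 2 :=
            mul_le_mul_of_nonneg_right h21 (Real.exp_nonneg 2)
        _ = Real.exp (7/2 : ℝ) := by rw [← Real.exp_add]; norm_num
    calc (2 * Real.exp 2) ^ k ≤ (Real.exp (7/2 : ℝ)) ^ k :=
          pow_le_pow_left₀ (by positivity) h2 k
      _ = Real.exp ((k : ℝ) * (7/2)) := (Real.exp_nat_mul _ k).symm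
      _ = Real.exp (4 * k + -(k:ℝ)/2) := by ring_nf
      _ = Real.exp (4 * k) * Real.exp (-(k : ℝ) / 2) := Real.exp_add _ _
  have hc0 : (ENNReal.ofReal (Real.exp (4 * k)) : ℝ≥0∞) ≠ 0 := by
    simp [Real.exp_pos]
  have hcT : (ENNReal.ofReal (Real.exp (4 * k)) : ℝ≥0∞) ≠ ⊤ := ENNReal.ofReal_ne_top
  have hμkB : μk B = (Measure.pi fun _ : Fin k => gaussianReal 0 (1 / k))
      {q : Fin k → ℝ | 2 * Real.sqrt k < ∑ j, |q j|} := rfl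
  rw [← hμkB, ← ENNReal.mul_le_mul_iff_right hc0 hcT]
  calc ENNReal.ofReal (Real.exp (4 * k)) * μk B
      ≤ ENNReal.ofReal (2 * Real.exp 2) ^ k := by
        rw [key2, key3] at key1
        exact key1.trans key4
    _ = ENNReal.ofReal ((2 * Real.exp 2) ^ k) := by
        rw [ENNReal.ofReal_pow (by positivity)]
    _ ≤ ENNReal.ofReal (Real.exp (4 * k) * Real.exp (-(k : ℝ) / 2)) :=
        ENNReal.ofReal_le_ofReal hreal
    _ = ENNReal.ofReal (Real.exp (4 * k)) * ENNReal.ofReal (Real.exp (-(k : ℝ) / 2)) :=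
        ENNReal.ofReal_mul (Real.exp_nonneg _)

theorem jl_laplace_mechanism_elementwise_privacy
    (n d k : ℕ) (hn : 0 < n) (hd : 0 < d) (hk : 0 < k) (ε : ℝ) (hε : 0 < ε)
    (X X' : Matrix (Fin n) (Fin d) ℝ)
    (hdiff : ∃ i₀ j₀, X i₀ j₀ ≠ X' i₀ j₀ ∧
      ∀ i j, (i, j) ≠ (i₀, j₀) → X i j = X' i j)
    (hl1 : ∑ i, ∑ j, |X i j - X' i j| ≤ 1) :
    ENNReal.ofReal (1 - d * Real.exp (-(k : ℝ) / 2)) ≤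
      (Measure.pi fun _ : Fin d => Measure.pi fun _ : Fin k => gaussianReal 0 (1 / k))
        {P | ∀ D : Set (Fin n → Fin k → ℝ), MeasurableSet D →
          ((Measure.pi fun _ : Fin n => Measure.pi fun _ : Fin k =>
              laplace (2 * Real.sqrt k / ε))
            {Δ | (fun i j => (∑ l, X i l * P l j) + Δ i j) ∈ D} ≤
            ENNReal.ofReal (Real.exp ε) *
              (Measure.pi fun _ : Fin n => Measure.pi fun _ : Fin k =>
                laplace (2 * Real.sqrt k / ε))
                {Δ | (fun i j => (∑ l, X' i l * P l j) + Δ i j) ∈ D}) ∧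
          ((Measure.pi fun _ : Fin n => Measure.pi fun _ : Fin k =>
              laplace (2 * Real.sqrt k / ε))
            {Δ | (fun i j => (∑ l, X' i l * P l j) + Δ i j) ∈ D} ≤
            ENNReal.ofReal (Real.exp ε) *
              (Measure.pi fun _ : Fin n => Measure.pi fun _ : Fin k =>
                laplace (2 * Real.sqrt k / ε))
                {Δ | (fun i j => (∑ l, X i l * P l j) + Δ i j) ∈ D})} := by
  
  obtain ⟨i₀, j₀, hne, heqs⟩ := hdiff
  have hk0 : (0 : ℝ) < k := by exact_mod_cast hk
  have hsk : 0 < Real.sqrt k := Real.sqrt_pos.2 hk0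
  have hb : 0 < 2 * Real.sqrt k / ε := by positivity
  set G : Set (Fin d → Fin k → ℝ) := {P | ∑ j, |P j₀ j| ≤ 2 * Real.sqrt k} with hGdef
  have hGm : MeasurableSet G := by
    have hm : Measurable fun P : Fin d → Fin k → ℝ => ∑ j, |P j₀ j| :=
      Finset.measurable_sum _ fun (j : Fin k) _ =>
        ((measurable_pi_apply j).comp (measurable_pi_apply j₀)).abs
    exact measurableSet_le hm measurable_const
  have hcol : ∑ i, |X i j₀ - X' i j₀| ≤ 1 := by
    refine le_trans ?_ hl1
    apply Finset.sum_le_sum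
    intro i _
    exact Finset.single_le_sum (f := fun j : Fin d => |X i j - X' i j|)
      (fun j _ => abs_nonneg _) (Finset.mem_univ j₀)
  have hsub : G ⊆ {P : Fin d → Fin k → ℝ |
      ∀ D : Set (Fin n → Fin k → ℝ), MeasurableSet D →
        ((Measure.pi fun _ : Fin n => Measure.pi fun _ : Fin k =>
            laplace (2 * Real.sqrt k / ε))
          {Δ | (fun i j => (∑ l, X i l * P l j) + Δ i j) ∈ D} ≤
          ENNReal.ofReal (Real.exp ε) *
            (Measure.pi fun _ : Fin n => Measure.pi fun _ : Fin k =>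
              laplace (2 * Real.sqrt k / ε))
              {Δ | (fun i j => (∑ l, X' i l * P l j) + Δ i j) ∈ D}) ∧
        ((Measure.pi fun _ : Fin n => Measure.pi fun _ : Fin k =>
            laplace (2 * Real.sqrt k / ε))
          {Δ | (fun i j => (∑ l, X' i l * P l j) + Δ i j) ∈ D} ≤
          ENNReal.ofReal (Real.exp ε) *
            (Measure.pi fun _ : Fin n => Measure.pi fun _ : Fin k =>
              laplace (2 * Real.sqrt k / ε))
              {Δ | (fun i j => (∑ l, X i l * P l j) + Δ i j) ∈ D})} := by
    intro P hP D hD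
    have hP' : ∑ j, |P j₀ j| ≤ 2 * Real.sqrt k := hP
    have hCdiff : ∀ (i : Fin n) (j : Fin k),
        (∑ l, X i l * P l j) - (∑ l, X' i l * P l j) = (X i j₀ - X' i j₀) * P j₀ j := by
      intro i j
      rw [← Finset.sum_sub_distrib, Finset.sum_eq_single j₀]
      · rw [sub_mul]
      · intro l _ hl
        rw [heqs i l (by simp [Prod.ext_iff, hl]), sub_self]
      · intro h
        exact absurd (Finset.mem_univ j₀) h
    have hbound : ∑ i, ∑ j, |(∑ l, X i l * P l j) - (∑ l, X' i l * P l j)|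
        ≤ ε * (2 * Real.sqrt k / ε) := by
      calc ∑ i, ∑ j, |(∑ l, X i l * P l j) - (∑ l, X' i l * P l j)|
          = ∑ i, |X i j₀ - X' i j₀| * ∑ j, |P j₀ j| := by
            refine Finset.sum_congr rfl fun i _ => ?_
            rw [Finset.mul_sum]
            refine Finset.sum_congr rfl fun j _ => ?_
            rw [hCdiff i j, abs_mul]
        _ = (∑ i, |X i j₀ - X' i j₀|) * ∑ j, |P j₀ j| := by rw [Finset.sum_mul]
        _ ≤ 1 * (2 * Real.sqrt k) := by
            apply mul_le_mul hcol hP' ?_ zero_le_one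
            exact Finset.sum_nonneg fun j _ => abs_nonneg _
        _ = ε * (2 * Real.sqrt k / ε) := by
            rw [one_mul]
            field_simp
    constructor
    · exact shift_priv hb (fun i j => ∑ l, X i l * P l j)
        (fun i j => ∑ l, X' i l * P l j) hbound hD
    · refine shift_priv hb (fun i j => ∑ l, X' i l * P l j)
        (fun i j => ∑ l, X i l * P l j) ?_ hD
      calc ∑ i, ∑ j, |(∑ l, X' i l * P l j) - (∑ l, X i l * P l j)|
          = ∑ i, ∑ j, |(∑ l, X i l * P l j) - (∑ l, X' i l * P l j)| := by
            simp_rw [abs_sub_comm]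
        _ ≤ ε * (2 * Real.sqrt k / ε) := hbound
  set μP := Measure.pi fun _ : Fin d => Measure.pi fun _ : Fin k => gaussianReal 0 (1 / k)
    with hμP
  haveI : IsProbabilityMeasure μP := by rw [hμP]; infer_instance
  have hGc : μP Gᶜ ≤ ENNReal.ofReal (Real.exp (-(k : ℝ) / 2)) := by
    have hset : Gᶜ = Set.pi Set.univ (fun l : Fin d =>
        if l = j₀ then {q : Fin k → ℝ | 2 * Real.sqrt k < ∑ j, |q j|} else Set.univ) := by
      ext P
      simp only [Set.mem_compl_iff, hGdef, Set.mem_setOf_eq, not_le, Set.mem_pi,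
        Set.mem_univ, true_implies]
      constructor
      · intro h l
        by_cases hl : l = j₀
        · subst hl; simp only [if_pos rfl, Set.mem_setOf_eq]; exact h
        · simp [hl]
      · intro h
        have := h j₀
        simpa using this
    rw [hμP, hset, Measure.pi_pi,
      Finset.prod_eq_single j₀ (fun l _ hl => by rw [if_neg hl]; exact measure_univ)
        (fun h => absurd (Finset.mem_univ j₀) h), if_pos rfl]
    exact gauss_tail k hk
  have hG1 : 1 - ENNReal.ofReal (Real.exp (-(k : ℝ) / 2)) ≤ μP G := by
    have hadd : μP G + μP Gᶜ = 1 := by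
      rw [measure_add_measure_compl hGm, measure_univ]
    have hGeq : μP G = 1 - μP Gᶜ := by
      rw [← hadd, ENNReal.add_sub_cancel_right (measure_ne_top _ _)]
    rw [hGeq]
    exact tsub_le_tsub_left hGc 1
  refine le_trans ?_ (le_trans hG1 (measure_mono hsub))
  rw [← ENNReal.ofReal_one, ← ENNReal.ofReal_sub 1 (Real.exp_nonneg _)]
  apply ENNReal.ofReal_le_ofReal
  have hd1 : (1 : ℝ) ≤ d := by exact_mod_cast hd
  nlinarith [Real.exp_pos (-(k : ℝ) / 2)]
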